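/- arXiv:2306.07237 — 2 statements merged into one kernel-verified Lean document; each statement's English description precedes it below -/
import Mathlib

section
/- If S is a set of n points in convex position in general position (n ≥ 2), then S admits ⌊n/2⌋ pairwise edge-disjoint plane straight-line spanning paths. -/
/-- Points in the plane. -/
abbrev Pt := ℝ × ℝ

/-- No three distinct points of `S` are collinear. -/
def GenPos (S : Set Pt) : Prop :=
  ∀ a ∈ S, ∀ b ∈ S, ∀ c ∈ S, a ≠ b → a ≠ c → b ≠ c →
    ¬ Collinear ℝ ({a, b, c} : Set Pt)

/-- A point `p` outside the hull sees `q ∈ S` if the segment `pq` meets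
the convex hull of `S` exactly in `{q}`. -/
def Sees (p q : Pt) (S : Set Pt) : Prop :=
  segment ℝ p q ∩ convexHull ℝ S = {q}

/-- The set of points of `S` seen from `p`. -/
def SeenSet (p : Pt) (S : Set Pt) : Set Pt := {q ∈ S | Sees p q S}

/-- `x` is an extreme point of `S`. -/
def ExtremePt (S : Set Pt) (x : Pt) : Prop := x ∈ S ∧ x ∉ convexHull ℝ (S \ {x})

/-- `ab` is an edge of the boundary of the convex hull of `S`. -/
def HullEdge (S : Set Pt) (a b : Pt) : Prop :=
  a ∈ S ∧ b ∈ S ∧ a ≠ b ∧ segment ℝ a b ⊆ frontier (convexHull ℝ S)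

/-- A list enumerating the extreme points of `S` in cyclic convex-position
order along the boundary of the convex hull. -/
def HullCycle (S : Set Pt) (l : List Pt) : Prop :=
  l.Nodup ∧ {x | x ∈ l} = {x | ExtremePt S x} ∧
    ∀ i < l.length, HullEdge S l[i]! l[(i + 1) % l.length]!

/-- A contiguous arc along the boundary of the hull of `S`
beginning in `a` and ending in `c`. -/
def Arc (S : Set Pt) (a c : Pt) (A : List Pt) : Prop :=
  ∃ l, HullCycle S l ∧ ∃ k ≤ l.length,
    A = l.take k ∧ A.head? = some a ∧ A.getLast? = some c

/-- The (undirected) edges of the path given by the list `l`. -/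
def edgeSet (l : List Pt) : Set (Set Pt) :=
  {e | ∃ p ∈ l.zip l.tail, e = ({p.1, p.2} : Set Pt)}

/-- The straight-line drawing of the path `l` is crossing-free: two edges meet
only in common endpoints. -/
def PlaneList (l : List Pt) : Prop :=
  ∀ i j : ℕ, i < j → j + 1 < l.length →
    segment ℝ l[i]! l[i + 1]! ∩ segment ℝ l[j]! l[j + 1]! ⊆
      ({l[i]!, l[i + 1]!} ∩ {l[j]!, l[j + 1]!} : Set Pt)

/-- `l` visits every point of `S` exactly once. -/
def IsSpanningPath (S : Set Pt) (l : List Pt) : Prop :=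
  l.Nodup ∧ {x | x ∈ l} = S

/-- A crossing-free straight-line spanning path of `S`. -/
def PlaneSpanningPath (S : Set Pt) (l : List Pt) : Prop :=
  IsSpanningPath S l ∧ PlaneList l

/-- Two paths are edge-disjoint if no segment is an edge of both. -/
def EdgeDisjoint (P Q : List Pt) : Prop := ∀ e ∈ edgeSet P, e ∉ edgeSet Q

/-- `S` admits three pairwise edge-disjoint plane spanning paths. -/
def ThreePaths (S : Set Pt) : Prop :=
  ∃ P Q R : List Pt,
    PlaneSpanningPath S P ∧ PlaneSpanningPath S Q ∧ PlaneSpanningPath S R ∧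
    EdgeDisjoint P Q ∧ EdgeDisjoint P R ∧ EdgeDisjoint Q R

/-- `(S₁, S₂)` is a balanced separated partition of `S`. -/
def BSP (S S₁ S₂ : Finset Pt) : Prop :=
  S₁ ∪ S₂ = S ∧ Disjoint S₁ S₂ ∧
  (S₁.card : ℤ) - S₂.card ≤ 1 ∧ (S₂.card : ℤ) - S₁.card ≤ 1 ∧
  Disjoint (convexHull ℝ (S₁ : Set Pt)) (convexHull ℝ (S₂ : Set Pt))

/-- `ab` is an edge of the visibility graph `V(S₁,S₂)`. -/
def VisEdge (S₁ S₂ : Finset Pt) (a b : Pt) : Prop :=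
  a ∈ S₁ ∧ b ∈ S₂ ∧
  segment ℝ a b ∩ (convexHull ℝ (S₁ : Set Pt) ∪ convexHull ℝ (S₂ : Set Pt))
    = ({a, b} : Set Pt)

/-- Two segments cross: their open segments share a point. -/
def SegCross (a b c d : Pt) : Prop :=
  (openSegment ℝ a b ∩ openSegment ℝ c d).Nonempty

/-- Consecutive vertices of `l` alternate between `S₁` and `S₂`. -/
def Alternating (S₁ S₂ : Finset Pt) (l : List Pt) : Prop :=
  ∀ i, i + 1 < l.length →
    (l[i]! ∈ S₁ ∧ l[i + 1]! ∈ S₂) ∨ (l[i]! ∈ S₂ ∧ l[i + 1]! ∈ S₁)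

/-- A zig-zag path for the balanced separated partition `(S₁,S₂)` of `S`. -/
def ZigZag (S S₁ S₂ : Finset Pt) (l : List Pt) : Prop :=
  PlaneSpanningPath (S : Set Pt) l ∧ Alternating S₁ S₂ l

/-- Twice the signed area of the triangle `a b c`; positive iff `c` lies to the
left of the directed line `ab`. -/
def ccw (a b c : Pt) : ℝ :=
  (b.1 - a.1) * (c.2 - a.2) - (b.2 - a.2) * (c.1 - a.1)

/-- `uv` is a halving segment of `S`: the line through `u` and `v` has exactly
`(|S| - 2)/2` points of `S` strictly on each side. -/
def Halving (S : Finset Pt) (u v : Pt) : Prop :=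
  u ∈ S ∧ v ∈ S ∧ u ≠ v ∧
  2 * ((S : Set Pt) ∩ {s | 0 < ccw u v s}).ncard = S.card - 2 ∧
  2 * ((S : Set Pt) ∩ {s | ccw u v s < 0}).ncard = S.card - 2

/-- The wheel configuration: all points but one in convex position, and one
interior point `y` such that every line through `y` and another point of the
configuration halves the remaining points. -/
def IsWheel (S : Finset Pt) : Prop :=
  ∃ y ∈ S,
    (∀ x ∈ S.erase y, x ∉ convexHull ℝ (((S.erase y : Finset Pt) : Set Pt) \ {x})) ∧
    y ∈ interior (convexHull ℝ ((S.erase y : Finset Pt) : Set Pt)) ∧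
    ∀ x ∈ S.erase y, Halving S y x

/-- `v` is a switchable path for the balanced separated partition `(S₁,S₂)` of
`S`: its edges are visibility edges, they cross a separating line of the
partition in order along the line, and every open triangle spanned by three
consecutive vertices contains no point of `S`. -/
def Switchable (S S₁ S₂ : Finset Pt) (v : List Pt) : Prop :=
  2 ≤ v.length ∧
  (∀ i, i + 1 < v.length →
    VisEdge S₁ S₂ v[i]! v[i + 1]! ∨ VisEdge S₁ S₂ v[i + 1]! v[i]!) ∧
  (∃ (f : Pt →ₗ[ℝ] ℝ) (c : ℝ),
    (∀ x ∈ S₁, f x < c) ∧ (∀ x ∈ S₂, c < f x) ∧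
    ∃ x : ℕ → Pt,
      (∀ i, i + 1 < v.length → x i ∈ segment ℝ v[i]! v[i + 1]! ∧ f (x i) = c) ∧
      ∃ g : Pt →ₗ[ℝ] ℝ, ∀ i j, i < j → j + 1 < v.length → g (x i) < g (x j)) ∧
  ∀ i, i + 2 < v.length →
    ∀ s ∈ S, s ∉ interior (convexHull ℝ ({v[i]!, v[i + 1]!, v[i + 2]!} : Set Pt))

/-- `u` is a bridged vertex of the partition `(S₁,S₂)` of `S`: an endpoint of an
edge of the boundary of `conv S` with one endpoint in each class. -/
def Bridged (S S₁ S₂ : Finset Pt) (u : Pt) : Prop :=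
  ∃ w, HullEdge (S : Set Pt) u w ∧
    ((u ∈ S₁ ∧ w ∈ S₂) ∨ (u ∈ S₂ ∧ w ∈ S₁))

/-- `u` is incident with at least two edges of the visibility graph. -/
def IncidentVisEdges2 (S₁ S₂ : Finset Pt) (u : Pt) : Prop :=
  ∃ w₁ w₂, w₁ ≠ w₂ ∧
    (VisEdge S₁ S₂ u w₁ ∨ VisEdge S₁ S₂ w₁ u) ∧
    (VisEdge S₁ S₂ u w₂ ∨ VisEdge S₁ S₂ w₂ u)


lemma ccw_cycle (a b c : Pt) : ccw a b c = ccw b c a := by unfold ccw; ring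
lemma ccw_swap (a b c : Pt) : ccw a b c = -ccw a c b := by unfold ccw; ring

lemma ccw_affine (a b x y : Pt) (u v : ℝ) (huv : u + v = 1) :
    ccw a b (u • x + v • y) = u * ccw a b x + v * ccw a b y := by
  have hv : v = 1 - u := by linarith
  subst hv
  unfold ccw
  simp only [Prod.fst_add, Prod.snd_add, Prod.smul_fst, Prod.smul_snd, smul_eq_mul]
  ring

lemma mem_seg {x y z : Pt} (h : z ∈ segment ℝ x y) :
    ∃ u v : ℝ, 0 ≤ u ∧ 0 ≤ v ∧ u + v = 1 ∧ u • x + v • y = z := h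

lemma ccw_seg_pos {a b x y z : Pt} (hx : 0 < ccw a b x) (hy : 0 < ccw a b y)
    (hz : z ∈ segment ℝ x y) : 0 < ccw a b z := by
  obtain ⟨u, v, hu, hv, huv, rfl⟩ := mem_seg hz
  rw [ccw_affine a b x y u v huv]
  rcases eq_or_lt_of_le hu with h|h
  · have : v = 1 := by linarith
    subst this; simp [← h]; linarith
  · nlinarith [mul_pos h hx, mul_nonneg hv hy.le]

lemma ccw_seg_neg {a b x y z : Pt} (hx : ccw a b x < 0) (hy : ccw a b y < 0)
    (hz : z ∈ segment ℝ x y) : ccw a b z < 0 := by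
  obtain ⟨u, v, hu, hv, huv, rfl⟩ := mem_seg hz
  rw [ccw_affine a b x y u v huv]
  rcases eq_or_lt_of_le hu with h|h
  · have : v = 1 := by linarith
    subst this; simp [← h]; linarith
  · nlinarith [mul_pos h (neg_pos.2 hx), mul_nonneg hv (neg_nonneg.2 hy.le)]

lemma ccw_self1 (a b : Pt) : ccw a b a = 0 := by unfold ccw; ring
lemma ccw_self2 (a b : Pt) : ccw a b b = 0 := by unfold ccw; ring

lemma ccw_seg_zero {a b z : Pt} (hz : z ∈ segment ℝ a b) : ccw a b z = 0 := by
  obtain ⟨u, v, hu, hv, huv, rfl⟩ := mem_seg hz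
  rw [ccw_affine a b a b u v huv, ccw_self1, ccw_self2]; ring

lemma pt_ext {p q : Pt} (h1 : p.1 = q.1) (h2 : p.2 = q.2) : p = q := Prod.ext h1 h2

lemma collinear_param {a : Pt} (b c : Pt) (v : Pt) (s t : ℝ)
    (hb : b = s • v + a) (hc : c = t • v + a) : Collinear ℝ ({a, b, c} : Set Pt) := by
  rw [collinear_iff_of_mem (Set.mem_insert a {b, c})]
  refine ⟨v, ?_⟩
  rintro p (rfl | rfl | rfl)
  · exact ⟨0, by simp⟩
  · exact ⟨s, by simpa using hb⟩
  · exact ⟨t, by simpa using hc⟩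

lemma collinear_of_ccw {a b c : Pt} (h : ccw a b c = 0) :
    Collinear ℝ ({a, b, c} : Set Pt) := by
  unfold ccw at h
  by_cases h1 : b.1 - a.1 = 0
  · by_cases h2 : b.2 - a.2 = 0
    · have hb : b = a := pt_ext (by linarith) (by linarith)
      subst hb
      refine collinear_param b c (c - b) 0 1 (by simp) ?_
      refine pt_ext ?_ ?_ <;> simp
    · have hc1 : c.1 - a.1 = 0 := by
        have h' : (b.2 - a.2) * (c.1 - a.1) = 0 := by linear_combination (c.2 - a.2) * h1 - h
        rcases mul_eq_zero.1 h' with h'' | h''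
        · exact absurd h'' h2
        · exact h''
      refine collinear_param b c ((0 : ℝ), (1 : ℝ)) (b.2 - a.2) (c.2 - a.2) ?_ ?_ <;>
        refine pt_ext ?_ ?_ <;> simp <;> linarith
  · refine collinear_param b c (b - a) 1 ((c.1 - a.1) / (b.1 - a.1)) ?_ ?_
    · refine pt_ext ?_ ?_ <;> simp
    · refine pt_ext ?_ ?_ <;> simp
      · field_simp; ring
      · field_simp
        nlinarith [h]
lemma seg_shared {x y z p : Pt} (hnc : ¬ Collinear ℝ ({x, y, z} : Set Pt))
    (hp : p ∈ segment ℝ x y) (hq : p ∈ segment ℝ y z) : p = y := by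
  obtain ⟨u, v, hu, hv, huv, hp1⟩ := hp
  obtain ⟨s, t, hs, ht, hst, hp2⟩ := hq
  by_cases hu0 : u = 0
  · subst hu0
    have : v = 1 := by linarith
    subst this
    simpa using hp1.symm
  · exfalso
    apply hnc
    have h1 : u * x.1 + v * y.1 = s * y.1 + t * z.1 := by
      have := congrArg Prod.fst (hp1.trans hp2.symm)
      simpa [Prod.fst_add, Prod.smul_fst] using this
    have h2 : u * x.2 + v * y.2 = s * y.2 + t * z.2 := by
      have := congrArg Prod.snd (hp1.trans hp2.symm)
      simpa [Prod.snd_add, Prod.smul_snd] using this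
    have hx : x = (t / u) • ((z.1 - y.1, z.2 - y.2) : Pt) + y := by
      refine pt_ext ?_ ?_ <;> simp <;> field_simp
      · linear_combination h1 - y.1 * huv + y.1 * hst
      · linear_combination h2 - y.2 * huv + y.2 * hst
    have hz : z = (1 : ℝ) • ((z.1 - y.1, z.2 - y.2) : Pt) + y := by
      refine pt_ext ?_ ?_ <;> simp
    have : Collinear ℝ ({y, x, z} : Set Pt) := collinear_param x z _ _ _ hx hz
    rwa [Set.insert_comm] at this

lemma mem_hull_triangle {a b c x : Pt} (hD : 0 < ccw a b c)
    (h1 : 0 < ccw a b x) (h2 : 0 < ccw b c x) (h3 : 0 < ccw c a x) :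
    x ∈ convexHull ℝ ({a, b, c} : Set Pt) := by
  set D := ccw a b c with hDdef
  have key : x = (ccw b c x / D) • a + ((ccw c a x / D) • b + (ccw a b x / D) • c) := by
    have hsum : ccw b c x + ccw c a x + ccw a b x = D := by unfold D; unfold ccw; ring
    refine pt_ext ?_ ?_ <;>
      · simp only [Prod.fst_add, Prod.snd_add, Prod.smul_fst, Prod.smul_snd, smul_eq_mul]
        field_simp
        unfold D
        unfold ccw
        ring
  have h0 : (0:ℝ) < ccw b c x / D := div_pos h2 hD
  have h1' : (0:ℝ) < ccw c a x / D := div_pos h3 hD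
  have h2' : (0:ℝ) < ccw a b x / D := div_pos h1 hD
  have hsum : ccw b c x / D + (ccw c a x / D + ccw a b x / D) = 1 := by
    field_simp
    unfold D; unfold ccw; ring
  rw [key]
  have := (convex_convexHull ℝ ({a, b, c} : Set Pt)).sum_mem (t := (Finset.univ : Finset (Fin 3)))
    (w := ![ccw b c x / D, ccw c a x / D, ccw a b x / D]) (z := ![a, b, c])
    (by intro i _; fin_cases i <;> simp [h0.le, h1'.le, h2'.le])
    (by simp [Fin.sum_univ_three]; linarith [hsum])
    (by intro i _; fin_cases i <;>
        simp [subset_convexHull ℝ ({a,b,c} : Set Pt) (by simp : a ∈ _),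
              subset_convexHull ℝ ({a,b,c} : Set Pt) (by simp : b ∈ _),
              subset_convexHull ℝ ({a,b,c} : Set Pt) (by simp : c ∈ _)] <;>
        exact subset_convexHull ℝ _ (by simp))
  simpa [Fin.sum_univ_three, add_assoc] using this

/-- Enumerate a finset as a list strictly sorted by an injective real key. -/
lemma exists_sorted_list (κ : Pt → ℝ) :
    ∀ (T : Finset Pt), Set.InjOn κ T →
    ∃ l : List Pt, l.Nodup ∧ (∀ x, x ∈ l ↔ x ∈ T) ∧ l.length = T.card ∧
      l.Pairwise (fun p q => κ p < κ q) := by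
  intro T
  induction T using Finset.strongInduction with
  | _ T ih =>
    intro hinj
    rcases T.eq_empty_or_nonempty with rfl | hne
    · exact ⟨[], by simp⟩
    · obtain ⟨m, hm, hmin⟩ := T.exists_min_image κ hne
      obtain ⟨l, hnd, hmem, hlen, hsort⟩ := ih (T.erase m) (Finset.erase_ssubset hm)
        (hinj.mono (by simp [Finset.coe_subset, Finset.erase_subset]))
      refine ⟨m :: l, ?_, ?_, ?_, ?_⟩
      · refine List.nodup_cons.2 ⟨fun hc => ?_, hnd⟩
        have := (hmem m).1 hc
        simp at this
      · intro x
        simp only [List.mem_cons, hmem, Finset.mem_erase]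
        constructor
        · rintro (rfl | ⟨-, h⟩) <;> [exact hm; exact h]
        · intro hx
          by_cases hxm : x = m
          · left; exact hxm
          · right; exact ⟨hxm, hx⟩
      · have := Finset.card_pos.2 hne
        simp [hlen, Finset.card_erase_of_mem hm]
        omega
      · refine List.pairwise_cons.2 ⟨fun q hq => ?_, hsort⟩
        have hq' := (hmem q).1 hq
        have hqT : q ∈ T := Finset.mem_of_mem_erase hq'
        have hne' : q ≠ m := (Finset.mem_erase.1 hq').1
        have hle := hmin q hqT
        rcases lt_or_eq_of_le hle with h | h
        · exact h
        · exact absurd (hinj hm hqT h) (Ne.symm hne')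

lemma ccw_ne_zero {S : Set Pt} (hgp : GenPos S) {a b c : Pt} (ha : a ∈ S) (hb : b ∈ S)
    (hc : c ∈ S) (hab : a ≠ b) (hac : a ≠ c) (hbc : b ≠ c) : ccw a b c ≠ 0 :=
  fun h => hgp a ha b hb c hc hab hac hbc (collinear_of_ccw h)

/-- The central lemma: points in convex position can be listed in ccw convex order. -/
lemma exists_convex_cycle (S : Finset Pt) (hgp : GenPos (S : Set Pt))
    (hconv : ∀ x ∈ S, x ∉ convexHull ℝ ((S : Set Pt) \ {x})) (hne : S.Nonempty) :
    ∃ l : List Pt, l.Nodup ∧ (∀ x, x ∈ l ↔ x ∈ S) ∧ l.length = S.card ∧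
      ∀ i j k, i < j → j < k → k < l.length →
        0 < ccw l[i]! l[j]! l[k]! := by
  -- pick the lexicographically smallest point p₀
  obtain ⟨xm, hxm, hxmin⟩ := S.exists_min_image Prod.fst hne
  have hT0ne : (S.filter (fun p => p.1 = xm.1)).Nonempty := ⟨xm, by simp [hxm]⟩
  obtain ⟨p0, hp0T, hp0min⟩ := (S.filter (fun p => p.1 = xm.1)).exists_min_image Prod.snd hT0ne
  have hp0S : p0 ∈ S := (Finset.mem_filter.1 hp0T).1
  have hp0x : p0.1 = xm.1 := (Finset.mem_filter.1 hp0T).2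
  have hxle : ∀ q ∈ S, p0.1 ≤ q.1 := fun q hq => hp0x ▸ hxmin q hq
  have hvert : ∀ q ∈ S, q ≠ p0 → q.1 = p0.1 → p0.2 < q.2 := by
    intro q hq hqne hqx
    have hqT : q ∈ S.filter (fun p => p.1 = xm.1) := Finset.mem_filter.2 ⟨hq, by rw [hqx, hp0x]⟩
    rcases lt_or_eq_of_le (hp0min q hqT) with h | h
    · exact h
    · exact absurd (pt_ext hqx h.symm) hqne
  set σ : Pt → ℝ := fun q => (q.2 - p0.2) / (q.1 - p0.1) with hσ
  set κ : Pt → ℝ := fun q => if q.1 = p0.1 then 2 else Real.arctan (σ q) with hκ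
  have harc2 : ∀ x : ℝ, Real.arctan x < 2 := by
    intro x
    have h1 := Real.arctan_lt_pi_div_two x
    nlinarith [Real.pi_lt_d2]
  -- strict x-inequality for non-vertical points
  have hxlt : ∀ q ∈ S, q.1 ≠ p0.1 → p0.1 < q.1 := fun q hq hne' =>
    lt_of_le_of_ne (hxle q hq) (Ne.symm hne')
  -- ccw is zero iff slopes match
  have hccw_eq : ∀ q q' : Pt, q.1 ≠ p0.1 → q'.1 ≠ p0.1 →
      ccw p0 q q' = ((q.1 - p0.1) * (q'.1 - p0.1)) * (σ q' - σ q) := by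
    intro q q' h1 h2
    have h1' : q.1 - p0.1 ≠ 0 := sub_ne_zero.2 h1
    have h2' : q'.1 - p0.1 ≠ 0 := sub_ne_zero.2 h2
    unfold ccw
    rw [hσ]
    field_simp
  have hinj : Set.InjOn κ (S.erase p0 : Finset Pt) := by
    intro q hq q' hq' hkk
    simp only [Finset.coe_erase, Set.mem_diff, Finset.mem_coe, Set.mem_singleton_iff] at hq hq'
    by_contra hne'
    have hnc := hgp p0 hp0S q hq.1 q' hq'.1 (Ne.symm hq.2) (Ne.symm hq'.2) hne'
    apply hnc
    apply collinear_of_ccw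
    by_cases hv1 : q.1 = p0.1
    · by_cases hv2 : q'.1 = p0.1
      · unfold ccw; rw [hv1, hv2]; ring
      · rw [hκ] at hkk; simp only [if_pos hv1, if_neg hv2] at hkk
        exact absurd hkk.symm (ne_of_lt (harc2 _))
    · by_cases hv2 : q'.1 = p0.1
      · rw [hκ] at hkk; simp only [if_neg hv1, if_pos hv2] at hkk
        exact absurd hkk (ne_of_lt (harc2 _))
      · rw [hκ] at hkk; simp only [if_neg hv1, if_neg hv2] at hkk
        have : σ q = σ q' := Real.arctan_injective hkk
        rw [hccw_eq q q' hv1 hv2, this]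
        ring
  have hstar0 : ∀ q ∈ S, ∀ q' ∈ S, q ≠ p0 → q' ≠ p0 → κ q < κ q' → 0 < ccw p0 q q' := by
    intro q hq q' hq' hqp hq'p hlt
    by_cases hv2 : q'.1 = p0.1
    · -- q' vertical, q must be non-vertical
      by_cases hv1 : q.1 = p0.1
      · rw [hκ] at hlt; simp [if_pos hv1, if_pos hv2] at hlt
      · have h1 : p0.1 < q.1 := hxlt q hq hv1
        have h2 : p0.2 < q'.2 := hvert q' hq' hq'p hv2
        unfold ccw
        rw [hv2]
        nlinarith
    · by_cases hv1 : q.1 = p0.1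
      · rw [hκ] at hlt; simp only [if_pos hv1, if_neg hv2] at hlt
        exact absurd hlt (not_lt.2 (harc2 _).le)
      · rw [hκ] at hlt; simp only [if_neg hv1, if_neg hv2] at hlt
        have hσlt : σ q < σ q' := Real.arctan_strictMono.lt_iff_lt.1 hlt
        rw [hccw_eq q q' hv1 hv2]
        have h1 : 0 < q.1 - p0.1 := sub_pos.2 (hxlt q hq hv1)
        have h2 : 0 < q'.1 - p0.1 := sub_pos.2 (hxlt q' hq' hv2)
        have h3 : 0 < σ q' - σ q := sub_pos.2 hσlt
        positivity
  obtain ⟨rest, hnd, hmem, hlen, hsortP⟩ := exists_sorted_list κ (S.erase p0) hinj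
  have hrest_mem : ∀ i (h : i < rest.length), rest[i] ∈ S ∧ rest[i] ≠ p0 := by
    intro i h
    have := (hmem rest[i]).1 (rest.getElem_mem h)
    exact ⟨Finset.mem_of_mem_erase this, (Finset.mem_erase.1 this).1⟩
  have hS0 : ∀ j k, j < k → k < rest.length → 0 < ccw p0 rest[j]! rest[k]! := by
    intro j k hjk hk
    have hj : j < rest.length := hjk.trans hk
    rw [getElem!_pos rest j hj, getElem!_pos rest k hk]
    have hκlt := List.pairwise_iff_getElem.1 hsortP j k hj hk hjk
    exact hstar0 _ (hrest_mem j hj).1 _ (hrest_mem k hk).1 (hrest_mem j hj).2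
      (hrest_mem k hk).2 hκlt
  have hp0nr : p0 ∉ rest := fun hc => (Finset.mem_erase.1 ((hmem p0).1 hc)).1 rfl
  refine ⟨p0 :: rest, List.nodup_cons.2 ⟨hp0nr, hnd⟩, ?_, ?_, ?_⟩
  · intro x
    simp only [List.mem_cons, hmem, Finset.mem_erase]
    constructor
    · rintro (rfl | ⟨-, h⟩) <;> [exact hp0S; exact h]
    · intro hx
      by_cases hxm : x = p0
      · exact Or.inl hxm
      · exact Or.inr ⟨hxm, hx⟩
  · rw [List.length_cons, hlen, Finset.card_erase_of_mem hp0S]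
    have := Finset.card_pos.2 hne
    omega
  · intro i j k hij hjk hk
    simp only [List.length_cons] at hk
    have hgetc : ∀ m, m < rest.length + 1 → (p0 :: rest)[m]! =
        if m = 0 then p0 else rest[m-1]! := by
      intro m hm
      rcases m with _ | m'
      · simp [getElem!_pos]
      · simp only [Nat.succ_ne_zero, if_false, Nat.add_sub_cancel]
        rw [getElem!_pos (p0 :: rest) (m' + 1) (by simpa using hm),
            getElem!_pos rest m' (by omega)]
        simp
    rcases Nat.eq_zero_or_pos i with rfl | hi
    · rw [hgetc 0 (by omega), hgetc j (by omega), hgetc k (by omega)]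
      simp only [if_pos rfl, if_neg (by omega : j ≠ 0), if_neg (by omega : k ≠ 0)]
      exact hS0 (j-1) (k-1) (by omega) (by omega)
    · rw [hgetc i (by omega), hgetc j (by omega), hgetc k (by omega)]
      simp only [if_neg (by omega : i ≠ 0), if_neg (by omega : j ≠ 0),
        if_neg (by omega : k ≠ 0)]
      have hi' : i - 1 < rest.length := by omega
      have hj' : j - 1 < rest.length := by omega
      have hk' : k - 1 < rest.length := by omega
      set a := rest[i-1]! with ha
      set b := rest[j-1]! with hb
      set c := rest[k-1]! with hc
      have hae : a = rest[(i-1)] := by rw [ha, getElem!_pos rest _ hi']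
      have hbe : b = rest[(j-1)] := by rw [hb, getElem!_pos rest _ hj']
      have hce : c = rest[(k-1)] := by rw [hc, getElem!_pos rest _ hk']
      have haS : a ∈ S := hae ▸ (hrest_mem _ hi').1
      have hbS : b ∈ S := hbe ▸ (hrest_mem _ hj').1
      have hcS : c ∈ S := hce ▸ (hrest_mem _ hk').1
      have hap : a ≠ p0 := hae ▸ (hrest_mem _ hi').2
      have hbp : b ≠ p0 := hbe ▸ (hrest_mem _ hj').2
      have hcp : c ≠ p0 := hce ▸ (hrest_mem _ hk').2
      have hA : 0 < ccw p0 a b := by rw [ha, hb]; exact hS0 (i-1) (j-1) (by omega) hj'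
      have hB : 0 < ccw p0 b c := by rw [hb, hc]; exact hS0 (j-1) (k-1) (by omega) hk'
      have hC : 0 < ccw p0 a c := by rw [ha, hc]; exact hS0 (i-1) (k-1) (by omega) hk'
      have hab : a ≠ b := by intro h; rw [h, ccw_self2] at hA; exact lt_irrefl _ hA
      have hbc : b ≠ c := by intro h; rw [h, ccw_self2] at hB; exact lt_irrefl _ hB
      have hac : a ≠ c := by intro h; rw [h, ccw_self2] at hC; exact lt_irrefl _ hC
      rcases lt_trichotomy (ccw a b c) 0 with hneg | hzero | hpos
      · exfalso
        apply hconv b hbS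
        have hmem3 : ({p0, a, c} : Set Pt) ⊆ (S : Set Pt) \ {b} := by
          rintro p (rfl | rfl | rfl) <;>
            refine ⟨by assumption, by simp [hab, hbc, hac, hap, hbp, hcp, hab.symm, hbc.symm, hac.symm, hap.symm, hbp.symm, hcp.symm]⟩
        refine convexHull_mono hmem3 (mem_hull_triangle hC hA ?_ ?_)
        · rw [ccw_swap]; linarith
        · rw [ccw_cycle]; exact hB
      · exact absurd hzero (ccw_ne_zero hgp haS hbS hcS hab hac hbc)
      · exact hpos

/-! ## Cyclic order combinatorics -/

def CycOrd (x y z : ℕ) : Prop := (x < y ∧ y < z) ∨ (y < z ∧ z < x) ∨ (z < x ∧ x < y)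

lemma mod_shift (n c x : ℕ) (hx : x < n) :
    (c + x) % n = if c % n + x < n then c % n + x else c % n + x - n := by
  have hn : 0 < n := lt_of_le_of_lt (Nat.zero_le x) hx
  have h1 : (c + x) % n = (c % n + x) % n := by
    conv_lhs => rw [Nat.add_mod, Nat.mod_eq_of_lt hx]
  rw [h1]
  have hc : c % n < n := Nat.mod_lt _ hn
  split_ifs with h
  · exact Nat.mod_eq_of_lt h
  · rw [Nat.mod_eq_sub_mod (by omega)]
    exact Nat.mod_eq_of_lt (by omega)

lemma cyc_shift {n c x y z : ℕ} (hx : x < n) (hy : y < n) (hz : z < n)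
    (h : CycOrd x y z) : CycOrd ((c + x) % n) ((c + y) % n) ((c + z) % n) := by
  rw [mod_shift n c x hx, mod_shift n c y hy, mod_shift n c z hz]
  have hc : c % n < n := Nat.mod_lt _ (by omega)
  unfold CycOrd at h ⊢
  split_ifs <;> omega

/-- ccw positivity from cyclic order of indices. -/
lemma ccw_of_cyc {l : List Pt}
    (hstar : ∀ i j k, i < j → j < k → k < l.length → 0 < ccw l[i]! l[j]! l[k]!)
    {u v w : ℕ} (hu : u < l.length) (hv : v < l.length) (hw : w < l.length)
    (h : CycOrd u v w) : 0 < ccw l[u]! l[v]! l[w]! := by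
  rcases h with ⟨h1, h2⟩ | ⟨h1, h2⟩ | ⟨h1, h2⟩
  · exact hstar u v w h1 h2 hw
  · rw [ccw_cycle]; exact hstar v w u h1 h2 hu
  · rw [ccw_cycle, ccw_cycle]; exact hstar w u v h1 h2 hv

/-! ## The zig-zag index functions -/

/-- position of the `t`-th vertex in shifted coordinates. -/
def bfun (n t : ℕ) : ℕ := if t % 2 = 0 then (n-1)/2 - t/2 else (n-1)/2 + (t+1)/2

/-- list position of the `t`-th vertex of the `r`-th zig-zag path. -/
def posf (n r t : ℕ) : ℕ := (r + (n - (n-1)/2) + bfun n t) % n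

lemma bfun_lt {n t : ℕ} (ht : t < n) : bfun n t < n := by
  unfold bfun; split_ifs <;> omega

lemma bfun_inj {n t t' : ℕ} (ht : t < n) (ht' : t' < n) (h : bfun n t = bfun n t') :
    t = t' := by
  unfold bfun at h; split_ifs at h <;> omega

lemma posf_lt {n r t : ℕ} (hn : 0 < n) : posf n r t < n := Nat.mod_lt _ hn

lemma posf_inj {n r t t' : ℕ} (ht : t < n) (ht' : t' < n)
    (h : posf n r t = posf n r t') : t = t' := by
  unfold posf at h
  rw [mod_shift n _ _ (bfun_lt ht), mod_shift n _ _ (bfun_lt ht')] at h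
  have h1 := bfun_lt ht
  have h2 := bfun_lt ht'
  have hc : (r + (n - (n-1)/2)) % n < n := Nat.mod_lt _ (by omega)
  apply bfun_inj ht ht'
  split_ifs at h <;> omega

lemma posf_sum {n r t : ℕ} (hn : 0 < n) (ht : t + 1 < n) :
    (posf n r t + posf n r (t + 1)) % n = if t % 2 = 0 then (2*r+1) % n else (2*r) % n := by
  unfold posf
  rw [← Nat.add_mod]
  have hkey : ∀ m : ℕ, (m + 2 * n) % n = m % n := by
    intro m
    rw [Nat.add_mul_mod_self_right]
  split_ifs with h
  · have : r + (n - (n-1)/2) + bfun n t + (r + (n - (n-1)/2) + bfun n (t+1))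
        = (2*r+1) + 2 * n := by
      unfold bfun
      rw [if_pos h, if_neg (by omega)]
      omega
    rw [this, hkey]
  · have : r + (n - (n-1)/2) + bfun n t + (r + (n - (n-1)/2) + bfun n (t+1))
        = (2*r) + 2 * n := by
      unfold bfun
      rw [if_neg h, if_pos (by omega)]
      omega
    rw [this, hkey]

lemma bfun_cyc_even {n i s : ℕ} (hi : i+1 < n) (his : i+2 ≤ s) (hs : s < n) (hp : i % 2 = 0) :
    CycOrd (bfun n i) (bfun n (i+1)) (bfun n s) := by
  unfold CycOrd bfun
  split_ifs <;> omega

lemma bfun_cyc_odd {n i s : ℕ} (hi : i+1 < n) (his : i+2 ≤ s) (hs : s < n) (hp : i % 2 = 1) :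
    CycOrd (bfun n i) (bfun n s) (bfun n (i+1)) := by
  unfold CycOrd bfun
  split_ifs <;> omega

/-- The key separation fact: later vertices lie on a fixed side of earlier edges. -/
lemma key_side {l : List Pt} {n : ℕ} (hlen : l.length = n)
    (hstar : ∀ i j k, i < j → j < k → k < l.length → 0 < ccw l[i]! l[j]! l[k]!)
    {r i s : ℕ} (hi : i + 1 < n) (his : i + 2 ≤ s) (hs : s < n) :
    (i % 2 = 0 → 0 < ccw l[posf n r i]! l[posf n r (i+1)]! l[posf n r s]!) ∧
    (i % 2 = 1 → ccw l[posf n r i]! l[posf n r (i+1)]! l[posf n r s]! < 0) := by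
  have hn : 0 < n := by omega
  have hx := bfun_lt (show i < n by omega)
  have hy := bfun_lt hi
  have hz := bfun_lt hs
  have hstar' : ∀ a b c, a < n → b < n → c < n → CycOrd a b c →
      0 < ccw l[a]! l[b]! l[c]! := by
    intro a b c ha hb hc h
    exact ccw_of_cyc hstar (hlen ▸ ha) (hlen ▸ hb) (hlen ▸ hc) h
  constructor
  · intro hpar
    apply hstar' _ _ _ (posf_lt hn) (posf_lt hn) (posf_lt hn)
    unfold posf
    exact cyc_shift hx hy hz (bfun_cyc_even hi his hs hpar)
  · intro hpar
    have hneg : 0 < ccw l[posf n r i]! l[posf n r s]! l[posf n r (i+1)]! := by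
      apply hstar' _ _ _ (posf_lt hn) (posf_lt hn) (posf_lt hn)
      unfold posf
      exact cyc_shift hx hz hy (bfun_cyc_odd hi his hs hpar)
    rw [ccw_swap] at hneg
    linarith

lemma mem_zip_tail {l : List Pt} {p : Pt × Pt} :
    p ∈ l.zip l.tail ↔ ∃ i, i + 1 < l.length ∧ p.1 = l[i]! ∧ p.2 = l[i+1]! := by
  have hlen : (l.zip l.tail).length = l.length - 1 := by
    rw [List.length_zip, List.length_tail]
    omega
  rw [List.mem_iff_getElem]
  constructor
  · rintro ⟨i, h, rfl⟩
    have hi : i + 1 < l.length := by omega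
    refine ⟨i, hi, ?_, ?_⟩
    · rw [List.getElem_zip, getElem!_pos l i (by omega)]
    · rw [List.getElem_zip, getElem!_pos l (i+1) hi]
      exact List.getElem_tail ..
  · rintro ⟨i, hi, h1, h2⟩
    refine ⟨i, by omega, ?_⟩
    rw [List.getElem_zip]
    refine Prod.ext ?_ ?_ <;> simp only
    · rw [h1, getElem!_pos l i (by omega)]
    · rw [h2, getElem!_pos l (i+1) hi]
      exact List.getElem_tail ..






theorem main_paths (S : Finset Pt) (h2 : 2 ≤ S.card) (hgp : GenPos (S : Set Pt))
    (hconv : ∀ x ∈ S, x ∉ convexHull ℝ ((S : Set Pt) \ {x})) :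
    ∃ f : Fin (S.card / 2) → List Pt,
      (∀ i, PlaneSpanningPath (S : Set Pt) (f i)) ∧
      ∀ i j, i ≠ j → EdgeDisjoint (f i) (f j) := by
  classical
  obtain ⟨l, hnd, hmem, hlen, hstar⟩ := exists_convex_cycle S hgp hconv
    (Finset.card_pos.1 (by omega))
  set n := S.card with hn
  have hn0 : 0 < n := by omega
  set Z : ℕ → List Pt := fun r => (List.range n).map (fun t => l[posf n r t]!) with hZ
  have hZlen : ∀ r, (Z r).length = n := by intro r; simp [hZ]
  have hZget : ∀ r t, t < n → (Z r)[t]! = l[posf n r t]! := by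
    intro r t ht
    rw [getElem!_pos (Z r) t (by rw [hZlen]; exact ht)]
    simp [hZ]
  have hlinj : ∀ a b, a < n → b < n → l[a]! = l[b]! → a = b := by
    intro a b ha hb h
    rw [getElem!_pos l a (by omega), getElem!_pos l b (by omega)] at h
    exact (List.Nodup.getElem_inj_iff hnd).1 h
  have hlmem : ∀ a, a < n → l[a]! ∈ S := by
    intro a ha
    rw [getElem!_pos l a (by omega)]
    exact (hmem _).1 (l.getElem_mem _)
  have hZmem : ∀ r t, t < n → (Z r)[t]! ∈ S := by
    intro r t ht
    rw [hZget r t ht]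
    exact hlmem _ (posf_lt hn0)
  have hZne : ∀ r t t', t < n → t' < n → t ≠ t' → (Z r)[t]! ≠ (Z r)[t']! := by
    intro r t t' ht ht' hne h
    rw [hZget r t ht, hZget r t' ht'] at h
    exact hne (posf_inj ht ht' (hlinj _ _ (posf_lt hn0) (posf_lt hn0) h))
  have hZnodup : ∀ r, (Z r).Nodup := by
    intro r
    refine List.pairwise_iff_getElem.2 ?_
    intro a b ha hb hab
    rw [hZlen] at ha hb
    have := hZne r a b ha hb (by omega)
    rwa [getElem!_pos _ a (by rw [hZlen]; omega), getElem!_pos _ b (by rw [hZlen]; omega)] at this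
  have hsurj : ∀ r m, m < n → ∃ t, t < n ∧ posf n r t = m := by
    intro r m hm
    have hsub : (Finset.range n).image (posf n r) ⊆ Finset.range n := by
      intro x hx
      obtain ⟨t, _, rfl⟩ := Finset.mem_image.1 hx
      exact Finset.mem_range.2 (posf_lt hn0)
    have hcard : ((Finset.range n).image (posf n r)).card = n := by
      rw [Finset.card_image_of_injOn, Finset.card_range]
      intro a ha b hb h
      exact posf_inj (Finset.mem_range.1 ha) (Finset.mem_range.1 hb) h
    have heq := Finset.eq_of_subset_of_card_le hsub (by rw [hcard, Finset.card_range])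
    have : m ∈ (Finset.range n).image (posf n r) := by rw [heq]; exact Finset.mem_range.2 hm
    obtain ⟨t, ht, h⟩ := Finset.mem_image.1 this
    exact ⟨t, Finset.mem_range.1 ht, h⟩
  have hZspan : ∀ r, {x | x ∈ Z r} = (S : Set Pt) := by
    intro r
    ext x
    simp only [Set.mem_setOf_eq, Finset.mem_coe]
    constructor
    · intro hx
      obtain ⟨t, ht, rfl⟩ := List.mem_map.1 hx
      exact hlmem _ (posf_lt hn0)
    · intro hx
      have : x ∈ l := (hmem x).2 hx
      obtain ⟨m, hm, rfl⟩ := List.mem_iff_getElem.1 this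
      obtain ⟨t, ht, hpos⟩ := hsurj r m (by omega)
      subst hpos
      exact List.mem_map.2 ⟨t, List.mem_range.2 ht, getElem!_pos l _ hm⟩
  have hplane : ∀ r, PlaneList (Z r) := by
    intro r i j hij hj
    rw [hZlen] at hj
    rcases eq_or_lt_of_le (show i + 1 ≤ j from hij) with rfl | hij'
    · -- adjacent edges
      intro p ⟨h1, h2⟩
      have hd1 := hZne r i (i+1) (by omega) (by omega) (by omega)
      have hd2 := hZne r i (i+2) (by omega) (by omega) (by omega)
      have hd3 := hZne r (i+1) (i+2) (by omega) (by omega) (by omega)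
      have hnc := hgp _ (hZmem r i (by omega)) _ (hZmem r (i+1) (by omega)) _
        (hZmem r (i+2) (by omega)) hd1 hd2 hd3
      have hp : p = (Z r)[i+1]! := seg_shared hnc h1 h2
      subst hp
      exact ⟨Or.inr rfl, Or.inl rfl⟩
    · -- non-adjacent edges
      intro p ⟨h1, h2⟩
      exfalso
      have hkj := key_side hlen hstar (r := r) (i := i) (by omega) (by omega : i+2 ≤ j) (by omega)
      have hkj1 := key_side hlen hstar (r := r) (i := i) (by omega) (by omega : i+2 ≤ j+1) (by omega)
      rw [← hZget r i (by omega), ← hZget r (i+1) (by omega), ← hZget r j (by omega)] at hkj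
      rw [← hZget r i (by omega), ← hZget r (i+1) (by omega), ← hZget r (j+1) (by omega)] at hkj1
      have h0 : ccw (Z r)[i]! (Z r)[i+1]! p = 0 := ccw_seg_zero h1
      rcases Nat.even_or_odd i with he | ho
      · have hpar : i % 2 = 0 := Nat.even_iff.1 he
        have := ccw_seg_pos (hkj.1 hpar) (hkj1.1 hpar) h2
        linarith
      · have hpar : i % 2 = 1 := Nat.odd_iff.1 ho
        have := ccw_seg_neg (hkj.2 hpar) (hkj1.2 hpar) h2
        linarith
  have hedge : ∀ r e, e ∈ edgeSet (Z r) → ∃ a b, a < n ∧ b < n ∧ a ≠ b ∧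
      e = ({l[a]!, l[b]!} : Set Pt) ∧
      ((a + b) % n = (2*r) % n ∨ (a + b) % n = (2*r+1) % n) := by
    intro r e he
    obtain ⟨p, hp, rfl⟩ := he
    obtain ⟨i, hi, h1, h2⟩ := mem_zip_tail.1 hp
    rw [hZlen] at hi
    refine ⟨posf n r i, posf n r (i+1), posf_lt hn0, posf_lt hn0, ?_, ?_, ?_⟩
    · intro h
      exact absurd (posf_inj (by omega) (by omega) h) (by omega)
    · rw [h1, h2, hZget r i (by omega), hZget r (i+1) (by omega)]
    · have := posf_sum (n := n) (r := r) (t := i) hn0 hi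
      rcases Nat.even_or_odd i with he' | ho
      · right; rw [this, if_pos (Nat.even_iff.1 he')]
      · left; rw [this, if_neg (by rw [Nat.odd_iff.1 ho]; omega)]
  refine ⟨fun r => Z r.val, fun r => ⟨⟨hZnodup _, hZspan _⟩, hplane _⟩, ?_⟩
  intro r r' hrr e he he'
  obtain ⟨a, b, ha, hb, hab, hE, hsum⟩ := hedge r.val e he
  obtain ⟨a', b', ha', hb', hab', hE', hsum'⟩ := hedge r'.val e he'
  have heq : ({l[a]!, l[b]!} : Set Pt) = {l[a']!, l[b']!} := hE ▸ hE'
  have hma : l[a]! = l[a']! ∨ l[a]! = l[b']! := by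
    have : l[a]! ∈ ({l[a']!, l[b']!} : Set Pt) := heq ▸ Set.mem_insert _ _
    simpa using this
  have hmb : l[b]! = l[a']! ∨ l[b]! = l[b']! := by
    have : l[b]! ∈ ({l[a']!, l[b']!} : Set Pt) := heq ▸ Set.mem_insert_of_mem _ rfl
    simpa using this
  have hsum_eq : a + b = a' + b' := by
    rcases hma with h | h <;> rcases hmb with h' | h' <;>
      [skip; skip; skip; skip] <;>
      · have e1 := hlinj _ _ (by omega) (by omega) h
        have e2 := hlinj _ _ (by omega) (by omega) h'
        omega
  have hr2 : 2 * r.val + 1 < n := by have := r.isLt; omega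
  have hr2' : 2 * r'.val + 1 < n := by have := r'.isLt; omega
  have hrne : r.val ≠ r'.val := fun h => hrr (Fin.ext h)
  rw [hsum_eq] at hsum
  rw [Nat.mod_eq_of_lt (show 2 * r.val < n by omega),
      Nat.mod_eq_of_lt (show 2 * r.val + 1 < n by omega)] at hsum
  rw [Nat.mod_eq_of_lt (show 2 * r'.val < n by omega),
      Nat.mod_eq_of_lt (show 2 * r'.val + 1 < n by omega)] at hsum'
  rcases hsum with h | h <;> rcases hsum' with h' | h' <;>
    · have hfin := h.symm.trans h'
      omega

theorem stmt_18 (S : Finset Pt) (h2 : 2 ≤ S.card) (hgp : GenPos (S : Set Pt))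
    (hconv : ∀ x ∈ S, x ∉ convexHull ℝ ((S : Set Pt) \ {x})) :
    ∃ f : Fin (S.card / 2) → List Pt,
      (∀ i, PlaneSpanningPath (S : Set Pt) (f i)) ∧
      ∀ i j, i ≠ j → EdgeDisjoint (f i) (f j) := by
  exact main_paths S h2 hgp hconv
end

section
/- Every switchable path in the visibility graph of a balanced separated partition is non-crossing: no two of its straight-line edges share a point other than a common endpoint. -/
lemma mem_seg_s19 {a b x : Pt} : x ∈ segment ℝ a b ↔ ∃ t : ℝ, 0 ≤ t ∧ t ≤ 1 ∧ x = (1-t) • a + t • b := by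
  rw [segment_eq_image]
  constructor
  · rintro ⟨t, ht, rfl⟩; exact ⟨t, ht.1, ht.2, rfl⟩
  · rintro ⟨t, h0, h1, rfl⟩; exact ⟨t, ⟨h0, h1⟩, rfl⟩

lemma comb_fst (t : ℝ) (X Y : Pt) : ((1-t) • X + t • Y).1 = (1-t) * X.1 + t * Y.1 := rfl
lemma comb_snd (t : ℝ) (X Y : Pt) : ((1-t) • X + t • Y).2 = (1-t) * X.2 + t * Y.2 := rfl

lemma ccw_sum (A B C z : Pt) : ccw z B C + ccw A z C + ccw A B z = ccw A B C := by
  unfold ccw; ring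

lemma cramer1 (A B C z : Pt) :
    ccw A B C * z.1 = ccw z B C * A.1 + ccw A z C * B.1 + ccw A B z * C.1 := by
  unfold ccw; ring

lemma cramer2 (A B C z : Pt) :
    ccw A B C * z.2 = ccw z B C * A.2 + ccw A z C * B.2 + ccw A B z * C.2 := by
  unfold ccw; ring

lemma ccw_aff3 (A B X Y : Pt) (t : ℝ) :
    ccw A B ((1-t) • X + t • Y) = (1-t) * ccw A B X + t * ccw A B Y := by
  unfold ccw; rw [comb_fst, comb_snd]; ring

lemma ccw_aff1 (B C X Y : Pt) (t : ℝ) :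
    ccw ((1-t) • X + t • Y) B C = (1-t) * ccw X B C + t * ccw Y B C := by
  unfold ccw; rw [comb_fst, comb_snd]; ring

lemma ccw_aff2 (A C X Y : Pt) (t : ℝ) :
    ccw A ((1-t) • X + t • Y) C = (1-t) * ccw A X C + t * ccw A Y C := by
  unfold ccw; rw [comb_fst, comb_snd]; ring

lemma lin_aff (f : Pt →ₗ[ℝ] ℝ) (X Y : Pt) (t : ℝ) :
    f ((1-t) • X + t • Y) = (1-t) * f X + t * f Y := by
  rw [map_add, map_smul, map_smul]; simp [smul_eq_mul]

lemma pt_decomp (f : Pt →ₗ[ℝ] ℝ) (z : Pt) : f z = z.1 * f (1,0) + z.2 * f (0,1) := by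
  have hz : z = z.1 • ((1,0) : Pt) + z.2 • ((0,1) : Pt) := by
    apply Prod.ext <;> simp
  rw [hz, map_add, map_smul, map_smul]; simp [smul_eq_mul]

lemma line_functional (f : Pt →ₗ[ℝ] ℝ) (c : ℝ) (y₁ y₃ : Pt) (h1 : f y₁ = c) (h3 : f y₃ = c)
    (hne : y₁ ≠ y₃) (hnc : ∃ w, f w ≠ c) :
    ∃ K : ℝ, K ≠ 0 ∧ ∀ z, ccw y₁ y₃ z = K * (f z - c) := by
  set p := f (1,0) with hp
  set q := f (0,1) with hq
  have hdec : ∀ z : Pt, f z = z.1 * p + z.2 * q := fun z => pt_decomp f z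
  have hcon : (y₃.1 - y₁.1) * p + (y₃.2 - y₁.2) * q = 0 := by
    linear_combination (hdec y₁) - (hdec y₃) + h3 - h1
  by_cases hq0 : q = 0
  · have hp0 : p ≠ 0 := by
      intro hp0
      obtain ⟨w, hw⟩ := hnc
      rw [hdec w, hp0, hq0] at hw
      rw [hdec y₁, hp0, hq0] at h1
      simp at hw h1; rw [← h1] at hw; simp at hw
    have h31 : y₃.1 = y₁.1 := by
      rw [hq0] at hcon; simp at hcon
      rcases hcon with h | h
      · linarith
      · exact absurd h hp0
    have h32 : y₃.2 ≠ y₁.2 := by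
      intro h; exact hne (Prod.ext h31.symm h.symm)
    refine ⟨-(y₃.2 - y₁.2)/p, by
      intro h; rw [div_eq_zero_iff] at h
      rcases h with h | h
      · exact h32 (by linarith [neg_eq_zero.1 h])
      · exact hp0 h, ?_⟩
    intro z
    have hc : c = y₁.1 * p + y₁.2 * q := by rw [← h1, hdec]
    rw [hdec z, hc, div_mul_eq_mul_div, eq_comm, div_eq_iff hp0, eq_comm]
    unfold ccw
    linear_combination (z.2 - y₁.2) * hcon
  · refine ⟨(y₃.1 - y₁.1)/q, by
      intro h; rw [div_eq_zero_iff] at h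
      rcases h with h | h
      · have h31 : y₃.1 = y₁.1 := by linarith [sub_eq_zero.1 h]
        have : (y₃.2 - y₁.2) * q = 0 := by rw [h] at hcon; linarith
        have h32 : y₃.2 = y₁.2 := by
          rcases mul_eq_zero.1 this with h' | h'
          · linarith [sub_eq_zero.1 h']
          · exact absurd h' hq0
        exact hne (Prod.ext h31.symm h32.symm)
      · exact hq0 h, ?_⟩
    intro z
    have hc : c = y₁.1 * p + y₁.2 * q := by rw [← h1, hdec]
    rw [hdec z, hc, div_mul_eq_mul_div, eq_comm, div_eq_iff hq0, eq_comm]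
    unfold ccw
    linear_combination (-(z.1 - y₁.1)) * hcon

lemma collinear_param_s19 (y₁ y₃ y₂ : Pt) (h : ccw y₁ y₃ y₂ = 0) (hne : y₁ ≠ y₃) :
    ∃ s : ℝ, y₂ = (1-s) • y₁ + s • y₃ := by
  unfold ccw at h
  by_cases h1 : y₃.1 - y₁.1 = 0
  · have h2 : y₃.2 - y₁.2 ≠ 0 := by
      intro h2; exact hne (Prod.ext (by linarith) (by linarith))
    refine ⟨(y₂.2 - y₁.2)/(y₃.2 - y₁.2), Prod.ext ?_ ?_⟩
    · rw [comb_fst]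
      have : (y₃.2 - y₁.2) * (y₂.1 - y₁.1) = 0 := by linear_combination -h + (y₂.2 - y₁.2) * h1
      have h3 : y₂.1 = y₁.1 := by
        rcases mul_eq_zero.1 this with h' | h'
        · exact absurd h' h2
        · linarith
      rw [h3]; field_simp
      linarith [h1]
    · rw [comb_snd]; field_simp; ring
  · refine ⟨(y₂.1 - y₁.1)/(y₃.1 - y₁.1), Prod.ext ?_ ?_⟩
    · rw [comb_fst]; field_simp; ring
    · rw [comb_snd]; field_simp
      linear_combination h

lemma bar_seg (A B C z : Pt) (hD : ccw A B C ≠ 0) (hβ : ccw A z C = 0)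
    (hα : 0 ≤ ccw z B C / ccw A B C) (hγ : 0 ≤ ccw A B z / ccw A B C) :
    z ∈ segment ℝ A C := by
  have hsum := ccw_sum A B C z
  have hzBC : ccw z B C = ccw A B C - ccw A B z := by linarith
  rw [mem_seg_s19]
  refine ⟨ccw A B z / ccw A B C, hγ, ?_, ?_⟩
  · rw [hzBC, sub_div, div_self hD] at hα; linarith
  · have h1 := cramer1 A B C z
    have h2 := cramer2 A B C z
    rw [hβ] at h1 h2
    apply Prod.ext
    · rw [comb_fst]; field_simp; linear_combination h1 + A.1 * hzBC
    · rw [comb_snd]; field_simp; linear_combination h2 + A.2 * hzBC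

lemma bar_seg' (A B C z : Pt) (hD : ccw A B C ≠ 0) (hα : ccw z B C = 0)
    (hβ : 0 ≤ ccw A z C / ccw A B C) (hγ : 0 ≤ ccw A B z / ccw A B C) :
    z ∈ segment ℝ B C := by
  have hsum := ccw_sum A B C z
  have hAzC : ccw A z C = ccw A B C - ccw A B z := by linarith
  rw [mem_seg_s19]
  refine ⟨ccw A B z / ccw A B C, hγ, ?_, ?_⟩
  · rw [hAzC, sub_div, div_self hD] at hβ; linarith
  · have h1 := cramer1 A B C z
    have h2 := cramer2 A B C z
    rw [hα] at h1 h2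
    apply Prod.ext
    · rw [comb_fst]; field_simp; linear_combination h1 + B.1 * hAzC
    · rw [comb_snd]; field_simp; linear_combination h2 + B.2 * hAzC

-- uniqueness etc.

lemma f_inj_seg (f : Pt →ₗ[ℝ] ℝ) (c : ℝ) {w u z z' : Pt} (h1 : f w < c) (h2 : c < f u)
    (hz : z ∈ segment ℝ w u) (hz' : z' ∈ segment ℝ w u) (hfz : f z = c) (hfz' : f z' = c) :
    z = z' := by
  obtain ⟨t, _, _, rfl⟩ := mem_seg_s19.1 hz
  obtain ⟨t', _, _, rfl⟩ := mem_seg_s19.1 hz'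
  rw [lin_aff] at hfz hfz'
  have : t = t' := by nlinarith
  rw [this]


lemma minroot_weak (a0 a1 b0 b1 : ℝ) (ha0 : 0 ≤ a0) (hb0 : 0 ≤ b0) (h : a1 < 0 ∨ b1 < 0) :
    ∃ t : ℝ, 0 ≤ t ∧ t ≤ 1 ∧ 0 ≤ (1-t)*a0+t*a1 ∧ 0 ≤ (1-t)*b0+t*b1 ∧
      ((1-t)*a0+t*a1 = 0 ∨ (1-t)*b0+t*b1 = 0) := by
  have key : ∀ x0 x1 : ℝ, 0 ≤ x0 → x1 < 0 →
      (1 - x0/(x0-x1))*x0 + (x0/(x0-x1))*x1 = 0 ∧ 0 ≤ x0/(x0-x1) ∧ x0/(x0-x1) ≤ 1 := by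
    intro x0 x1 h0 h1
    have hd : (0:ℝ) < x0 - x1 := by linarith
    refine ⟨by field_simp; ring, div_nonneg h0 hd.le, by rw [div_le_one hd]; linarith⟩
  have mono : ∀ x0 x1 t t' : ℝ, 0 ≤ x0 → t ≤ t' → (1-t')*x0+t'*x1 = 0 → 0 ≤ t' → t' ≤ 1 → 0 ≤ t →
      0 ≤ (1-t)*x0+t*x1 := by
    intro x0 x1 t t' h0 hle hz ht'0 ht'1 ht
    rcases eq_or_lt_of_le ht'0 with hq | hq
    · have h00 : t = 0 := le_antisymm (hq ▸ hle) ht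
      have : x0 = 0 := by rw [← hq] at hz; linarith
      rw [h00, this]; ring_nf; linarith
    · have hv : t' * ((1-t)*x0+t*x1) = x0*(t'-t) := by linear_combination t*hz
      have h2 := mul_nonneg h0 (sub_nonneg.2 hle)
      nlinarith
  have conv : ∀ x0 x1 t : ℝ, 0 ≤ x0 → 0 ≤ x1 → 0 ≤ t → t ≤ 1 → 0 ≤ (1-t)*x0+t*x1 := by
    intro x0 x1 t h0 h1 ht ht1
    nlinarith
  by_cases ha1 : a1 < 0
  · by_cases hb1 : b1 < 0
    · obtain ⟨ea, pa, la⟩ := key a0 a1 ha0 ha1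
      obtain ⟨eb, pb, lb⟩ := key b0 b1 hb0 hb1
      rcases le_total (a0/(a0-a1)) (b0/(b0-b1)) with hle | hle
      · exact ⟨_, pa, la, ea.ge, mono b0 b1 _ _ hb0 hle eb pb lb pa, Or.inl ea⟩
      · exact ⟨_, pb, lb, mono a0 a1 _ _ ha0 hle ea pa la pb, eb.ge, Or.inr eb⟩
    · push_neg at hb1
      obtain ⟨ea, pa, la⟩ := key a0 a1 ha0 ha1
      exact ⟨_, pa, la, ea.ge, conv b0 b1 _ hb0 hb1 pa la, Or.inl ea⟩
  · push_neg at ha1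
    have hb1 : b1 < 0 := h.resolve_left (not_lt.2 ha1)
    obtain ⟨eb, pb, lb⟩ := key b0 b1 hb0 hb1
    exact ⟨_, pb, lb, conv a0 a1 _ ha0 ha1 pb lb, eb.ge, Or.inr eb⟩


lemma minroot_strict (a0 a1 b0 b1 : ℝ) (ha0 : 0 < a0) (hb0 : 0 < b0) (h : a1 < 0 ∨ b1 < 0) :
    ∃ t : ℝ, 0 < t ∧ t < 1 ∧ 0 ≤ (1-t)*a0+t*a1 ∧ 0 ≤ (1-t)*b0+t*b1 ∧
      ((1-t)*a0+t*a1 = 0 ∨ (1-t)*b0+t*b1 = 0) := by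
  have key : ∀ x0 x1 : ℝ, 0 < x0 → x1 < 0 →
      (1 - x0/(x0-x1))*x0 + (x0/(x0-x1))*x1 = 0 ∧ 0 < x0/(x0-x1) ∧ x0/(x0-x1) < 1 := by
    intro x0 x1 h0 h1
    have hd : (0:ℝ) < x0 - x1 := by linarith
    refine ⟨by field_simp; ring, div_pos h0 hd, by rw [div_lt_one hd]; linarith⟩
  have mono : ∀ x0 x1 t t' : ℝ, 0 ≤ x0 → t ≤ t' → (1-t')*x0+t'*x1 = 0 → 0 ≤ t' → t' ≤ 1 → 0 ≤ t →
      0 ≤ (1-t)*x0+t*x1 := by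
    intro x0 x1 t t' h0 hle hz ht'0 ht'1 ht
    rcases eq_or_lt_of_le ht'0 with hq | hq
    · have h00 : t = 0 := le_antisymm (hq ▸ hle) ht
      have : x0 = 0 := by rw [← hq] at hz; linarith
      rw [h00, this]; ring_nf; linarith
    · have hv : t' * ((1-t)*x0+t*x1) = x0*(t'-t) := by linear_combination t*hz
      have h2 := mul_nonneg h0 (sub_nonneg.2 hle)
      nlinarith
  have conv : ∀ x0 x1 t : ℝ, 0 ≤ x0 → 0 ≤ x1 → 0 ≤ t → t ≤ 1 → 0 ≤ (1-t)*x0+t*x1 := by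
    intro x0 x1 t h0 h1 ht ht1
    nlinarith
  by_cases ha1 : a1 < 0
  · by_cases hb1 : b1 < 0
    · obtain ⟨ea, pa, la⟩ := key a0 a1 ha0 ha1
      obtain ⟨eb, pb, lb⟩ := key b0 b1 hb0 hb1
      rcases le_total (a0/(a0-a1)) (b0/(b0-b1)) with hle | hle
      · exact ⟨_, pa, la, ea.ge, mono b0 b1 _ _ hb0.le hle eb pb.le lb.le pa.le, Or.inl ea⟩
      · exact ⟨_, pb, lb, mono a0 a1 _ _ ha0.le hle ea pa.le la.le pb.le, eb.ge, Or.inr eb⟩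
    · push_neg at hb1
      obtain ⟨ea, pa, la⟩ := key a0 a1 ha0 ha1
      exact ⟨_, pa, la, ea.ge, conv b0 b1 _ hb0.le hb1 pa.le la.le, Or.inl ea⟩
  · push_neg at ha1
    have hb1 : b1 < 0 := h.resolve_left (not_lt.2 ha1)
    obtain ⟨eb, pb, lb⟩ := key b0 b1 hb0 hb1
    exact ⟨_, pb, lb, conv a0 a1 _ ha0.le ha1 pb.le lb.le, eb.ge, Or.inr eb⟩

lemma param_between (a b m s : ℝ) (hm : m = (1-s)*a + s*b) (h1 : a < m) (h2 : m < b) :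
    0 < s ∧ s < 1 := by constructor <;> nlinarith

lemma param_cross (fw fu fp cc t s : ℝ) (e1 : fp = (1-t)*fw + t*fu)
    (e2 : cc = (1-s)*fw + s*fu) (h : fp < cc) (hw : fw < cc) (hu : cc < fu) : t < s := by
  nlinarith

lemma fq_lt (c fw t : ℝ) (h1 : fw < c) (ht : 0 < t) : (1-t)*c + t*fw < c := by nlinarith

set_option maxHeartbeats 1000000 in
lemma sw_core (f g : Pt →ₗ[ℝ] ℝ) (c : ℝ) (H : Set Pt) (hH : Convex ℝ H)
    (hHf : ∀ z ∈ H, f z < c)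
    (w₁ u₁ w₂ u₂ w₃ u₃ : Pt)
    (hw₁ : w₁ ∈ H) (hw₂ : w₂ ∈ H) (hw₃ : w₃ ∈ H)
    (hu₁ : c < f u₁) (hu₂ : c < f u₂) (hu₃ : c < f u₃)
    (hE1H : segment ℝ w₁ u₁ ∩ H ⊆ {w₁}) (hE3H : segment ℝ w₃ u₃ ∩ H ⊆ {w₃})
    (y₁ y₂ y₃ : Pt)
    (hy₁ : y₁ ∈ segment ℝ w₁ u₁) (hfy₁ : f y₁ = c)
    (hy₂ : y₂ ∈ segment ℝ w₂ u₂) (hfy₂ : f y₂ = c)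
    (hy₃ : y₃ ∈ segment ℝ w₃ u₃) (hfy₃ : f y₃ = c)
    (hg12 : g y₁ < g y₂) (hg23 : g y₂ < g y₃)
    (h12 : segment ℝ w₁ u₁ ∩ segment ℝ w₂ u₂ ⊆ ({w₁, u₁} ∩ {w₂, u₂} : Set Pt))
    (h23 : segment ℝ w₂ u₂ ∩ segment ℝ w₃ u₃ ⊆ ({w₂, u₂} ∩ {w₃, u₃} : Set Pt))
    (p : Pt) (hp1 : p ∈ segment ℝ w₁ u₁) (hp3 : p ∈ segment ℝ w₃ u₃)
    (hfp : f p < c) (hpw₁ : p ≠ w₁) (hpw₃ : p ≠ w₃) : False := by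
  have hfw₁ : f w₁ < c := hHf _ hw₁
  have hfw₂ : f w₂ < c := hHf _ hw₂
  have hfw₃ : f w₃ < c := hHf _ hw₃
  have hne13 : y₁ ≠ y₃ := by
    intro h
    exact absurd (hg12.trans hg23) (by rw [h]; exact lt_irrefl _)
  obtain ⟨K, hK, hKeq⟩ := line_functional f c y₁ y₃ hfy₁ hfy₃ hne13 ⟨u₁, ne_of_gt hu₁⟩
  have hD : ccw y₁ y₃ p ≠ 0 := by
    rw [hKeq]; exact mul_ne_zero hK (by intro h; rw [sub_eq_zero] at h; exact (ne_of_lt hfp) h)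
  set D := ccw y₁ y₃ p with hDdef
  have hγrat : ∀ z, ccw y₁ y₃ z / D = (f z - c) / (f p - c) := by
    intro z
    rw [hDdef, hKeq z, hKeq p, mul_div_mul_left _ _ hK]
  -- y₂ between y₁ and y₃
  have hccw2 : ccw y₁ y₃ y₂ = 0 := by rw [hKeq, hfy₂]; ring
  obtain ⟨s, hs⟩ := collinear_param_s19 y₁ y₃ y₂ hccw2 hne13
  have hgy₂ : g y₂ = (1-s) * g y₁ + s * g y₃ := by rw [hs, lin_aff]
  obtain ⟨hs0, hs1⟩ := param_between (g y₁) (g y₃) (g y₂) s hgy₂ hg12 hg23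
  have hy₃y₃p : ccw y₃ y₃ p = 0 := by unfold ccw; ring
  have hy₁y₁p : ccw y₁ y₁ p = 0 := by unfold ccw; ring
  have hαy₂ : ccw y₂ y₃ p = (1-s) * D := by
    rw [hs, ccw_aff1, hy₃y₃p, hDdef]; ring
  have hβy₂ : ccw y₁ y₂ p = s * D := by
    rw [hs, ccw_aff2, hy₁y₁p, hDdef]; ring
  -- E1 parameters: α'(w₁) < 0
  obtain ⟨t1, ht10, ht11, hpE1⟩ := mem_seg_s19.1 hp1
  obtain ⟨s1, hs10, hs11, hy₁E1⟩ := mem_seg_s19.1 hy₁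
  have hfpE1 : f p = (1-t1) * f w₁ + t1 * f u₁ := by rw [hpE1, lin_aff]
  have hfy₁E1 : c = (1-s1) * f w₁ + s1 * f u₁ := by rw [← hfy₁, hy₁E1, lin_aff]
  have ht1pos : 0 < t1 := by
    rcases lt_or_eq_of_le ht10 with h | h
    · exact h
    · exfalso; apply hpw₁; rw [hpE1, ← h]; simp
  have ht1s1 : t1 < s1 := param_cross (f w₁) (f u₁) (f p) c t1 s1 hfpE1 hfy₁E1 hfp hfw₁ hu₁
  have he1 : (0:ℝ) = (1-t1) * ccw w₁ y₃ p + t1 * ccw u₁ y₃ p := by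
    have h := ccw_aff1 y₃ p w₁ u₁ t1
    rw [← hpE1] at h
    have hz : ccw p y₃ p = 0 := by unfold ccw; ring
    rw [hz] at h; exact h
  have he2 : D = (1-s1) * ccw w₁ y₃ p + s1 * ccw u₁ y₃ p := by
    have h := ccw_aff1 y₃ p w₁ u₁ s1
    rw [← hy₁E1] at h
    exact h
  have hAw : ccw w₁ y₃ p * (s1 - t1) = -t1 * D := by linear_combination (-s1) * he1 + t1 * he2
  have hαw₁ : ccw w₁ y₃ p / D < 0 := by
    have : ccw w₁ y₃ p / D = -t1 / (s1 - t1) := by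
      rw [div_eq_div_iff hD (sub_ne_zero.2 ht1s1.ne')]
      linear_combination hAw
    rw [this]
    exact div_neg_of_neg_of_pos (neg_lt_zero.2 ht1pos) (sub_pos.2 ht1s1)
  -- E3 parameters: β'(w₃) < 0
  obtain ⟨t3, ht30, ht31, hpE3⟩ := mem_seg_s19.1 hp3
  obtain ⟨s3, hs30, hs31, hy₃E3⟩ := mem_seg_s19.1 hy₃
  have hfpE3 : f p = (1-t3) * f w₃ + t3 * f u₃ := by rw [hpE3, lin_aff]
  have hfy₃E3 : c = (1-s3) * f w₃ + s3 * f u₃ := by rw [← hfy₃, hy₃E3, lin_aff]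
  have ht3pos : 0 < t3 := by
    rcases lt_or_eq_of_le ht30 with h | h
    · exact h
    · exfalso; apply hpw₃; rw [hpE3, ← h]; simp
  have ht3s3 : t3 < s3 := param_cross (f w₃) (f u₃) (f p) c t3 s3 hfpE3 hfy₃E3 hfp hfw₃ hu₃
  have he3 : (0:ℝ) = (1-t3) * ccw y₁ w₃ p + t3 * ccw y₁ u₃ p := by
    have h := ccw_aff2 y₁ p w₃ u₃ t3
    rw [← hpE3] at h
    have hz : ccw y₁ p p = 0 := by unfold ccw; ring
    rw [hz] at h; exact h
  have he4 : D = (1-s3) * ccw y₁ w₃ p + s3 * ccw y₁ u₃ p := by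
    have h := ccw_aff2 y₁ p w₃ u₃ s3
    rw [← hy₃E3] at h
    exact h
  have hBw : ccw y₁ w₃ p * (s3 - t3) = -t3 * D := by linear_combination (-s3) * he3 + t3 * he4
  have hβw₃ : ccw y₁ w₃ p / D < 0 := by
    have : ccw y₁ w₃ p / D = -t3 / (s3 - t3) := by
      rw [div_eq_div_iff hD (sub_ne_zero.2 ht3s3.ne')]
      linear_combination hBw
    rw [this]
    exact div_neg_of_neg_of_pos (neg_lt_zero.2 ht3pos) (sub_pos.2 ht3s3)
  -- combination of ratios
  have hcomb : ∀ X Y : ℝ, ∀ t : ℝ, ((1-t) * X + t * Y) / D = (1-t) * (X / D) + t * (Y / D) := by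
    intro X Y t; field_simp
  -- step 8 : w₂ is not in the triangle
  have hw₂T : ccw w₂ y₃ p / D < 0 ∨ ccw y₁ w₂ p / D < 0 := by
    by_contra hcon
    push_neg at hcon
    obtain ⟨hα2, hβ2⟩ := hcon
    obtain ⟨t, ht0, ht1, hA, hB, hz⟩ :=
      minroot_weak (ccw w₂ y₃ p / D) (ccw w₁ y₃ p / D) (ccw y₁ w₂ p / D) (ccw y₁ w₁ p / D)
        hα2 hβ2 (Or.inl hαw₁)
    set q' : Pt := (1-t) • w₂ + t • w₁ with hq'def
    have hq'H : q' ∈ H := hH.segment_subset hw₂ hw₁ (mem_seg_s19.2 ⟨t, ht0, ht1, rfl⟩)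
    have hfq' : f q' < c := hHf _ hq'H
    have hγq' : 0 ≤ ccw y₁ y₃ q' / D := by
      rw [hγrat]
      apply le_of_lt
      rw [div_pos_iff]
      exact Or.inr ⟨sub_neg.2 hfq', sub_neg.2 hfp⟩
    have hαq' : ccw q' y₃ p / D = (1-t) * (ccw w₂ y₃ p / D) + t * (ccw w₁ y₃ p / D) := by
      rw [hq'def, ccw_aff1, hcomb]
    have hβq' : ccw y₁ q' p / D = (1-t) * (ccw y₁ w₂ p / D) + t * (ccw y₁ w₁ p / D) := by
      rw [hq'def, ccw_aff2, hcomb]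
    rcases hz with hz | hz
    · -- α'(q') = 0 : q' on segment y₃ p ⊆ E3
      have h0 : ccw q' y₃ p = 0 := by
        have := hαq'.trans hz
        exact (div_eq_zero_iff.1 this).resolve_right hD
      have hq'seg : q' ∈ segment ℝ y₃ p :=
        bar_seg' y₁ y₃ p q' hD h0 (by rw [hβq']; exact hB) hγq'
      have hq'E3 : q' ∈ segment ℝ w₃ u₃ :=
        (convex_segment w₃ u₃).segment_subset hy₃ hp3 hq'seg
      have hqw : q' = w₃ := hE3H ⟨hq'E3, hq'H⟩
      rw [← hqw, hβq'] at hβw₃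
      exact absurd hβw₃ (not_lt.2 hB)
    · -- β'(q') = 0 : q' on segment y₁ p ⊆ E1
      have h0 : ccw y₁ q' p = 0 := by
        have := hβq'.trans hz
        exact (div_eq_zero_iff.1 this).resolve_right hD
      have hq'seg : q' ∈ segment ℝ y₁ p :=
        bar_seg y₁ y₃ p q' hD h0 (by rw [hαq']; exact hA) hγq'
      have hq'E1 : q' ∈ segment ℝ w₁ u₁ :=
        (convex_segment w₁ u₁).segment_subset hy₁ hp1 hq'seg
      have hqw : q' = w₁ := hE1H ⟨hq'E1, hq'H⟩
      rw [← hqw, hαq'] at hαw₁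
      exact absurd hαw₁ (not_lt.2 hA)
  -- step 9 : walk from y₂ towards w₂ inside the triangle, find exit point q
  have hαy₂' : ccw y₂ y₃ p / D = 1 - s := by
    rw [hαy₂, mul_div_assoc, div_self hD, mul_one]
  have hβy₂' : ccw y₁ y₂ p / D = s := by
    rw [hβy₂, mul_div_assoc, div_self hD, mul_one]
  obtain ⟨t, ht0, ht1, hA, hB, hz⟩ :=
    minroot_strict (1-s) (ccw w₂ y₃ p / D) s (ccw y₁ w₂ p / D)
      (sub_pos.2 hs1) hs0 hw₂T
  set q : Pt := (1-t) • y₂ + t • w₂ with hqdef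
  have hqE2 : q ∈ segment ℝ w₂ u₂ :=
    (convex_segment w₂ u₂).segment_subset hy₂ (left_mem_segment ℝ w₂ u₂)
      (mem_seg_s19.2 ⟨t, ht0.le, ht1.le, rfl⟩)
  have hfq : f q < c := by
    rw [hqdef, lin_aff, hfy₂]; exact fq_lt c (f w₂) t hfw₂ ht0
  have hγq : 0 ≤ ccw y₁ y₃ q / D := by
    rw [hγrat]; apply le_of_lt; rw [div_pos_iff]
    exact Or.inr ⟨sub_neg.2 hfq, sub_neg.2 hfp⟩
  have hqnew₂ : q ≠ w₂ := by
    intro h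
    have h2 : f q = (1-t)*c + t*(f w₂) := by rw [hqdef, lin_aff, hfy₂]
    rw [h] at h2
    have h3 : (1-t)*(c - f w₂) = 0 := by linear_combination -h2
    rcases mul_eq_zero.1 h3 with h4 | h4
    · exact (ne_of_gt (sub_pos.2 ht1)) h4
    · exact (ne_of_gt (sub_pos.2 hfw₂)) h4
  have hqneu₂ : q ≠ u₂ := by
    intro h; rw [h] at hfq; exact absurd (hfq.trans hu₂) (lt_irrefl _)
  have hαq : ccw q y₃ p / D = (1-t) * (1-s) + t * (ccw w₂ y₃ p / D) := by
    rw [hqdef, ccw_aff1, hcomb, hαy₂']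
  have hβq : ccw y₁ q p / D = (1-t) * s + t * (ccw y₁ w₂ p / D) := by
    rw [hqdef, ccw_aff2, hcomb, hβy₂']
  rcases hz with hz | hz
  · -- α'(q) = 0 : q ∈ segment y₃ p ⊆ E3, so q ∈ E2 ∩ E3
    have h0 : ccw q y₃ p = 0 := by
      have := hαq.trans hz
      exact (div_eq_zero_iff.1 this).resolve_right hD
    have hqseg : q ∈ segment ℝ y₃ p :=
      bar_seg' y₁ y₃ p q hD h0 (by rw [hβq]; exact hB) hγq
    have hqE3 : q ∈ segment ℝ w₃ u₃ :=
      (convex_segment w₃ u₃).segment_subset hy₃ hp3 hqseg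
    have := (h23 ⟨hqE2, hqE3⟩).1
    rcases this with h | h
    · exact hqnew₂ h
    · exact hqneu₂ h
  · -- β'(q) = 0 : q ∈ segment y₁ p ⊆ E1, so q ∈ E1 ∩ E2
    have h0 : ccw y₁ q p = 0 := by
      have := hβq.trans hz
      exact (div_eq_zero_iff.1 this).resolve_right hD
    have hqseg : q ∈ segment ℝ y₁ p :=
      bar_seg y₁ y₃ p q hD h0 (by rw [hαq]; exact hA) hγq
    have hqE1 : q ∈ segment ℝ w₁ u₁ :=
      (convex_segment w₁ u₁).segment_subset hy₁ hp1 hqseg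
    have := (h12 ⟨hqE1, hqE2⟩).2
    rcases this with h | h
    · exact hqnew₂ h
    · exact hqneu₂ h

lemma sw_adj (S : Set Pt) (hgp : GenPos S) {a b c' : Pt} (ha : a ∈ S) (hb : b ∈ S) (hc : c' ∈ S)
    (hab : a ≠ b) (hbc : b ≠ c') (hac : a ≠ c') :
    segment ℝ a b ∩ segment ℝ b c' ⊆ ({a, b} ∩ {b, c'} : Set Pt) := by
  rintro p ⟨hp1, hp2⟩
  rw [segment_symm] at hp1
  obtain ⟨s, hs0, hs1, hseq⟩ := mem_seg_s19.1 hp1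
  obtain ⟨t, ht0, ht1, hteq⟩ := mem_seg_s19.1 hp2
  rcases eq_or_lt_of_le hs0 with h | hs0'
  · have : p = b := by rw [hseq, ← h]; simp
    rw [this]
    exact ⟨Or.inr rfl, Or.inl rfl⟩
  rcases eq_or_lt_of_le ht0 with h | ht0'
  · have : p = b := by rw [hteq, ← h]; simp
    rw [this]
    exact ⟨Or.inr rfl, Or.inl rfl⟩
  exfalso
  apply hgp a ha b hb c' hc hab hac hbc
  rw [collinear_iff_of_mem (show b ∈ ({a, b, c'} : Set Pt) by simp)]
  refine ⟨c' - b, ?_⟩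
  intro x hx
  have he1 : (1-s) * b.1 + s * a.1 = (1-t) * b.1 + t * c'.1 := by
    have := congrArg Prod.fst (hseq.symm.trans hteq)
    rwa [comb_fst, comb_fst] at this
  have he2 : (1-s) * b.2 + s * a.2 = (1-t) * b.2 + t * c'.2 := by
    have := congrArg Prod.snd (hseq.symm.trans hteq)
    rwa [comb_snd, comb_snd] at this
  rcases hx with rfl | rfl | rfl
  · refine ⟨t/s, ?_⟩
    apply Prod.ext
    · show x.1 = (t/s * (c'.1 - b.1)) + b.1
      field_simp
      linear_combination he1
    · show x.2 = (t/s * (c'.2 - b.2)) + b.2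
      field_simp
      linear_combination he2
  · exact ⟨0, by simp⟩
  · exact ⟨1, by simp⟩

theorem stmt_19 (S S₁ S₂ : Finset Pt) (hgp : GenPos (S : Set Pt))
    (hbsp : BSP S S₁ S₂) (v : List Pt) (hsw : Switchable S S₁ S₂ v) :
    PlaneList v := by
  obtain ⟨hlen2, hvis, ⟨f, c, hc1, hc2, x, hx, g, hg⟩, -⟩ := hsw
  obtain ⟨hunion, hdisj, -, -, -⟩ := hbsp
  have hS1f : ∀ z ∈ convexHull ℝ (S₁ : Set Pt), f z < c :=
    fun z hz => convexHull_min (fun w hw => hc1 w hw) (convex_halfSpace_lt f.isLinear c) hz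
  have hS2f : ∀ z ∈ convexHull ℝ (S₂ : Set Pt), c < f z :=
    fun z hz => convexHull_min (fun w hw => hc2 w hw) (convex_halfSpace_gt f.isLinear c) hz
  have memS : ∀ z : Pt, z ∈ S₁ ∨ z ∈ S₂ → z ∈ (S : Set Pt) := by
    intro z hz
    rw [← hunion]
    simp only [Finset.coe_union, Set.mem_union, Finset.mem_coe]
    exact hz
  have EDGE : ∀ k, k + 1 < v.length → ∃ w u : Pt,
      w ∈ S₁ ∧ u ∈ S₂ ∧ ({w, u} : Set Pt) = {v[k]!, v[k+1]!} ∧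
      segment ℝ v[k]! v[k+1]! = segment ℝ w u ∧
      segment ℝ w u ∩ (convexHull ℝ (S₁ : Set Pt) ∪ convexHull ℝ (S₂ : Set Pt))
        = ({w, u} : Set Pt) := by
    intro k hk
    rcases hvis k hk with h | h
    · exact ⟨v[k]!, v[k+1]!, h.1, h.2.1, rfl, rfl, h.2.2⟩
    · exact ⟨v[k+1]!, v[k]!, h.1, h.2.1, Set.pair_comm _ _, segment_symm ℝ _ _, h.2.2⟩
  have hne : ∀ k, k+1 < v.length → v[k]! ≠ v[k+1]! := by
    intro k hk h
    obtain ⟨w, u, hw, hu, hpair, -, -⟩ := EDGE k hk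
    have hwu : w ≠ u := fun h' => (Finset.disjoint_left.1 hdisj) hw (h' ▸ hu)
    apply hwu
    have hw2 : w ∈ ({v[k]!, v[k+1]!} : Set Pt) := by rw [← hpair]; exact Set.mem_insert _ _
    have hu2 : u ∈ ({v[k]!, v[k+1]!} : Set Pt) := by
      rw [← hpair]; exact Set.mem_insert_of_mem _ rfl
    rw [← h] at hw2 hu2
    simp only [Set.mem_singleton_iff, Set.mem_insert_iff, or_self] at hw2 hu2
    rw [hw2, hu2]
  have memSv : ∀ k, k+1 < v.length → v[k]! ∈ (S : Set Pt) ∧ v[k+1]! ∈ (S : Set Pt) := by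
    intro k hk
    obtain ⟨w, u, hw, hu, hpair, -, -⟩ := EDGE k hk
    have hw2 : v[k]! ∈ ({w, u} : Set Pt) := by rw [hpair]; exact Set.mem_insert _ _
    have hu2 : v[k+1]! ∈ ({w, u} : Set Pt) := by
      rw [hpair]; exact Set.mem_insert_of_mem _ rfl
    constructor
    · rcases hw2 with h | h
      · exact memS _ (Or.inl (h ▸ hw))
      · exact memS _ (Or.inr (h ▸ hu))
    · rcases hu2 with h | h
      · exact memS _ (Or.inl (h ▸ hw))
      · exact memS _ (Or.inr (h ▸ hu))
  have XUNIQ : ∀ k, k+1 < v.length → ∀ z, z ∈ segment ℝ v[k]! v[k+1]! → f z = c → z = x k := by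
    intro k hk z hz hfz
    obtain ⟨w, u, hw, hu, -, hsegeq, -⟩ := EDGE k hk
    exact f_inj_seg f c (hc1 w hw) (hc2 u hu) (hsegeq ▸ hz) (hsegeq ▸ (hx k hk).1)
      hfz (hx k hk).2
  have ADJ : ∀ k, k+2 < v.length →
      segment ℝ v[k]! v[k+1]! ∩ segment ℝ v[k+1]! v[k+1+1]! ⊆
        ({v[k]!, v[k+1]!} ∩ {v[k+1]!, v[k+1+1]!} : Set Pt) := by
    intro k hk
    have hk1 : k + 1 < v.length := by omega
    have hk2 : k + 1 + 1 < v.length := by omega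
    have hac : v[k]! ≠ v[k+1+1]! := by
      intro h
      have hmem : x (k+1) ∈ segment ℝ v[k]! v[k+1]! := by
        have h1 := (hx (k+1) hk2).1
        rw [segment_symm] at h1
        rw [← h] at h1
        rw [segment_symm ℝ v[k]!]
        rwa [segment_symm] at h1
      have h1 : x (k+1) = x k := XUNIQ k hk1 _ hmem (hx (k+1) hk2).2
      have := hg k (k+1) (by omega) (by omega)
      rw [h1] at this
      exact lt_irrefl _ this
    exact sw_adj (S : Set Pt) hgp (memSv k hk1).1 (memSv k hk1).2 (memSv (k+1) hk2).2
      (hne k hk1) (hne (k+1) hk2) hac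
  have KEY : ∀ d : ℕ, ∀ i : ℕ, 0 < d → i + d + 1 < v.length →
      segment ℝ v[i]! v[i+1]! ∩ segment ℝ v[i+d]! v[i+d+1]! ⊆
        ({v[i]!, v[i+1]!} ∩ {v[i+d]!, v[i+d+1]!} : Set Pt) := by
    intro d
    induction d using Nat.strong_induction_on with
    | _ d IH =>
      intro i hd hlen
      rcases eq_or_lt_of_le (show 1 ≤ d from hd) with hd1 | hd2
      · -- d = 1
        have hd1' : d = 1 := hd1.symm
        subst hd1'
        exact ADJ i (by omega)
      · -- d ≥ 2
        intro p hp
        obtain ⟨hpi, hpj⟩ := hp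
        obtain ⟨w1, u1, hw1, hu1, hpair1, hseg1, hvis1⟩ := EDGE i (by omega)
        obtain ⟨w2, u2, hw2, hu2, hpair2, hseg2, hvis2⟩ := EDGE (i+1) (by omega)
        obtain ⟨w3, u3, hw3, hu3, hpair3, hseg3, hvis3⟩ := EDGE (i+d) (by omega)
        by_cases hpa : p ∈ ({v[i]!, v[i+1]!} : Set Pt)
        · refine ⟨hpa, ?_⟩
          have hph : p ∈ convexHull ℝ (S₁ : Set Pt) ∪ convexHull ℝ (S₂ : Set Pt) := by
            have hp12 : p ∈ ({w1, u1} : Set Pt) := by rw [hpair1]; exact hpa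
            rcases hp12 with h | h
            · exact Or.inl (subset_convexHull ℝ _ (h ▸ Finset.mem_coe.2 hw1))
            · exact Or.inr (subset_convexHull ℝ _ (h ▸ Finset.mem_coe.2 hu1))
          have : p ∈ ({w3, u3} : Set Pt) := by
            rw [← hvis3]; exact ⟨hseg3 ▸ hpj, hph⟩
          rw [hpair3] at this
          exact this
        by_cases hpb : p ∈ ({v[i+d]!, v[i+d+1]!} : Set Pt)
        · refine ⟨?_, hpb⟩
          have hph : p ∈ convexHull ℝ (S₁ : Set Pt) ∪ convexHull ℝ (S₂ : Set Pt) := by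
            have hp12 : p ∈ ({w3, u3} : Set Pt) := by rw [hpair3]; exact hpb
            rcases hp12 with h | h
            · exact Or.inl (subset_convexHull ℝ _ (h ▸ Finset.mem_coe.2 hw3))
            · exact Or.inr (subset_convexHull ℝ _ (h ▸ Finset.mem_coe.2 hu3))
          have : p ∈ ({w1, u1} : Set Pt) := by
            rw [← hvis1]; exact ⟨hseg1 ▸ hpi, hph⟩
          rw [hpair1] at this
          exact this
        exfalso
        -- shared subset facts
        have h12 : segment ℝ w1 u1 ∩ segment ℝ w2 u2 ⊆ ({w1, u1} ∩ {w2, u2} : Set Pt) := by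
          rw [← hseg1, ← hseg2, hpair1, hpair2]
          exact IH 1 (by omega) i one_pos (by omega)
        have h23 : segment ℝ w2 u2 ∩ segment ℝ w3 u3 ⊆ ({w2, u2} ∩ {w3, u3} : Set Pt) := by
          rw [← hseg2, ← hseg3, hpair2, hpair3]
          have h := IH (d-1) (by omega) (i+1) (by omega) (by omega)
          have hidx : i+1+(d-1) = i+d := by omega
          rw [hidx] at h
          exact h
        have hpw1 : p ≠ w1 := by
          intro h
          apply hpa
          have : w1 ∈ ({v[i]!, v[i+1]!} : Set Pt) := by
            rw [← hpair1]; exact Set.mem_insert _ _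
          exact h ▸ this
        have hpu1 : p ≠ u1 := by
          intro h
          apply hpa
          have : u1 ∈ ({v[i]!, v[i+1]!} : Set Pt) := by
            rw [← hpair1]; exact Set.mem_insert_of_mem _ rfl
          exact h ▸ this
        have hpw3 : p ≠ w3 := by
          intro h
          apply hpb
          have : w3 ∈ ({v[i+d]!, v[i+d+1]!} : Set Pt) := by
            rw [← hpair3]; exact Set.mem_insert _ _
          exact h ▸ this
        have hpu3 : p ≠ u3 := by
          intro h
          apply hpb
          have : u3 ∈ ({v[i+d]!, v[i+d+1]!} : Set Pt) := by
            rw [← hpair3]; exact Set.mem_insert_of_mem _ rfl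
          exact h ▸ this
        have hx1 : x i ∈ segment ℝ w1 u1 := hseg1 ▸ (hx i (by omega)).1
        have hx2 : x (i+1) ∈ segment ℝ w2 u2 := hseg2 ▸ (hx (i+1) (by omega)).1
        have hx3 : x (i+d) ∈ segment ℝ w3 u3 := hseg3 ▸ (hx (i+d) (by omega)).1
        have hg12 : g (x i) < g (x (i+1)) := hg i (i+1) (by omega) (by omega)
        have hg23 : g (x (i+1)) < g (x (i+d)) := hg (i+1) (i+d) (by omega) (by omega)
        rcases lt_trichotomy (f p) c with hfp | hfp | hfp
        · -- below the line : use hull of S₁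
          have hE1H : segment ℝ w1 u1 ∩ convexHull ℝ (S₁ : Set Pt) ⊆ {w1} := by
            rintro z ⟨hz1, hz2⟩
            have : z ∈ ({w1, u1} : Set Pt) := by rw [← hvis1]; exact ⟨hz1, Or.inl hz2⟩
            rcases this with h | h
            · exact h
            · exfalso
              have := hS1f z hz2
              rw [h] at this
              exact absurd (this.trans (hc2 u1 hu1)) (lt_irrefl _)
          have hE3H : segment ℝ w3 u3 ∩ convexHull ℝ (S₁ : Set Pt) ⊆ {w3} := by
            rintro z ⟨hz1, hz2⟩
            have : z ∈ ({w3, u3} : Set Pt) := by rw [← hvis3]; exact ⟨hz1, Or.inl hz2⟩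
            rcases this with h | h
            · exact h
            · exfalso
              have := hS1f z hz2
              rw [h] at this
              exact absurd (this.trans (hc2 u3 hu3)) (lt_irrefl _)
          exact sw_core f g c (convexHull ℝ (S₁ : Set Pt)) (convex_convexHull ℝ _) hS1f
            w1 u1 w2 u2 w3 u3
            (subset_convexHull ℝ _ (Finset.mem_coe.2 hw1))
            (subset_convexHull ℝ _ (Finset.mem_coe.2 hw2))
            (subset_convexHull ℝ _ (Finset.mem_coe.2 hw3))
            (hc2 u1 hu1) (hc2 u2 hu2) (hc2 u3 hu3)
            hE1H hE3H
            (x i) (x (i+1)) (x (i+d))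
            hx1 (hx i (by omega)).2 hx2 (hx (i+1) (by omega)).2 hx3 (hx (i+d) (by omega)).2
            hg12 hg23 h12 h23
            p (hseg1 ▸ hpi) (hseg3 ▸ hpj) hfp hpw1 hpw3
        · -- on the line : contradiction with the order of crossing points
          have h1 : p = x i := XUNIQ i (by omega) p hpi hfp
          have h2 : p = x (i+d) := XUNIQ (i+d) (by omega) p hpj hfp
          have := hg i (i+d) (by omega) (by omega)
          rw [← h1, ← h2] at this
          exact lt_irrefl _ this
        · -- above the line : use hull of S₂ with -f
          have hS2f' : ∀ z ∈ convexHull ℝ (S₂ : Set Pt), (-f) z < -c := by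
            intro z hz
            rw [LinearMap.neg_apply]
            exact neg_lt_neg (hS2f z hz)
          have hE1H : segment ℝ u1 w1 ∩ convexHull ℝ (S₂ : Set Pt) ⊆ {u1} := by
            rintro z ⟨hz1, hz2⟩
            rw [segment_symm] at hz1
            have : z ∈ ({w1, u1} : Set Pt) := by rw [← hvis1]; exact ⟨hz1, Or.inr hz2⟩
            rcases this with h | h
            · exfalso
              have := hS2f z hz2
              rw [h] at this
              exact absurd ((hc1 w1 hw1).trans this) (lt_irrefl _)
            · exact h
          have hE3H : segment ℝ u3 w3 ∩ convexHull ℝ (S₂ : Set Pt) ⊆ {u3} := by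
            rintro z ⟨hz1, hz2⟩
            rw [segment_symm] at hz1
            have : z ∈ ({w3, u3} : Set Pt) := by rw [← hvis3]; exact ⟨hz1, Or.inr hz2⟩
            rcases this with h | h
            · exfalso
              have := hS2f z hz2
              rw [h] at this
              exact absurd ((hc1 w3 hw3).trans this) (lt_irrefl _)
            · exact h
          have h12' : segment ℝ u1 w1 ∩ segment ℝ u2 w2 ⊆ ({u1, w1} ∩ {u2, w2} : Set Pt) := by
            rw [segment_symm ℝ u1 w1, segment_symm ℝ u2 w2, Set.pair_comm u1 w1,
              Set.pair_comm u2 w2]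
            exact h12
          have h23' : segment ℝ u2 w2 ∩ segment ℝ u3 w3 ⊆ ({u2, w2} ∩ {u3, w3} : Set Pt) := by
            rw [segment_symm ℝ u2 w2, segment_symm ℝ u3 w3, Set.pair_comm u2 w2,
              Set.pair_comm u3 w3]
            exact h23
          have hfneg : ∀ z : Pt, f z = c → (-f) z = -c := by
            intro z hz; rw [LinearMap.neg_apply, hz]
          exact sw_core (-f) g (-c) (convexHull ℝ (S₂ : Set Pt)) (convex_convexHull ℝ _) hS2f'
            u1 w1 u2 w2 u3 w3
            (subset_convexHull ℝ _ (Finset.mem_coe.2 hu1))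
            (subset_convexHull ℝ _ (Finset.mem_coe.2 hu2))
            (subset_convexHull ℝ _ (Finset.mem_coe.2 hu3))
            (by rw [LinearMap.neg_apply]; exact neg_lt_neg (hc1 w1 hw1))
            (by rw [LinearMap.neg_apply]; exact neg_lt_neg (hc1 w2 hw2))
            (by rw [LinearMap.neg_apply]; exact neg_lt_neg (hc1 w3 hw3))
            hE1H hE3H
            (x i) (x (i+1)) (x (i+d))
            (by rw [segment_symm]; exact hx1) (hfneg _ (hx i (by omega)).2)
            (by rw [segment_symm]; exact hx2) (hfneg _ (hx (i+1) (by omega)).2)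
            (by rw [segment_symm]; exact hx3) (hfneg _ (hx (i+d) (by omega)).2)
            hg12 hg23 h12' h23'
            p (by rw [segment_symm]; exact hseg1 ▸ hpi) (by rw [segment_symm]; exact hseg3 ▸ hpj)
            (by rw [LinearMap.neg_apply]; exact neg_lt_neg hfp) hpu1 hpu3
  intro i j hij hjlen
  have h := KEY (j - i) i (by omega) (by omega)
  have hidx : i + (j - i) = j := by omega
  rw [hidx] at h
  exact h
end
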